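/- Let M ≥ e and let c, R > 0 satisfy c > 2R and c − R > M. Then (1/(2R))·∫_{c−R}^{c+R} |log(log x) − log(log c)| dx ≤ log(1 + log 2 / log M). -/
import Mathlib


open MeasureTheory

/-- the mean deviation of `log log x` from `log log c` on the interval
`[c − R, c + R]` is at most `log(1 + log 2 / log M)` when `c > 2R` and `c − R > M ≥ e`. -/
theorem loglog_average_deviation (M c R : ℝ)
    (hM : Real.exp 1 ≤ M) (hR : 0 < R) (hc : 2 * R < c) (hcM : M < c - R) :
    (1 / (2 * R)) * ∫ x in (c - R)..(c + R), |Real.log (Real.log x) - Real.log (Real.log c)| ≤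
      Real.log (1 + Real.log 2 / Real.log M) := by
  have hM0 : 0 < M := lt_of_lt_of_le (Real.exp_pos 1) hM
  have hlogM : 1 ≤ Real.log M := by
    rw [Real.le_log_iff_exp_le hM0]; exact hM
  have hlog2 : 0 < Real.log 2 := Real.log_pos one_lt_two
  set t : ℝ := 1 + Real.log 2 / Real.log M with ht
  have ht1 : 1 < t := by
    have : 0 < Real.log 2 / Real.log M := div_pos hlog2 (by linarith)
    simp only [ht]; linarith
  have hK : 0 < Real.log t := Real.log_pos ht1
  have hle : c - R ≤ c + R := by linarith
  -- pointwise bound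
  have key : ∀ x ∈ Set.Icc (c - R) (c + R),
      |Real.log (Real.log x) - Real.log (Real.log c)| ≤ Real.log t := by
    intro x hx
    have hx1 : c - R ≤ x := hx.1
    have hx2 : x ≤ c + R := hx.2
    have hMx : M < x := lt_of_lt_of_le hcM hx1
    have hx0 : 0 < x := lt_trans hM0 hMx
    have hMc : M < c := by linarith
    have hc0 : 0 < c := lt_trans hM0 hMc
    have hlogMx : Real.log M ≤ Real.log x := Real.log_le_log hM0 (le_of_lt hMx)
    have hlogMc : Real.log M ≤ Real.log c := Real.log_le_log hM0 (le_of_lt hMc)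
    have hlogx : 1 ≤ Real.log x := le_trans hlogM hlogMx
    have hlogc : 1 ≤ Real.log c := le_trans hlogM hlogMc
    rw [abs_sub_le_iff]
    constructor
    · -- log log x - log log c ≤ log t
      have h1 : Real.log x ≤ Real.log 2 + Real.log c := by
        calc Real.log x ≤ Real.log (2 * c) :=
              Real.log_le_log hx0 (by linarith)
          _ = Real.log 2 + Real.log c := Real.log_mul two_ne_zero (ne_of_gt hc0)
      have h2 : Real.log x ≤ t * Real.log c := by
        have h2' : Real.log 2 ≤ (Real.log 2 / Real.log M) * Real.log c := by
          rw [div_mul_eq_mul_div, le_div_iff₀ (by linarith)]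
          nlinarith
        simp only [ht]; nlinarith
      have h3 : Real.log (Real.log x) ≤ Real.log (t * Real.log c) :=
        Real.log_le_log (by linarith) h2
      rw [Real.log_mul (by linarith) (by linarith)] at h3
      linarith
    · -- log log c - log log x ≤ log t
      have h1 : Real.log c ≤ Real.log 2 + Real.log x := by
        calc Real.log c ≤ Real.log (2 * x) :=
              Real.log_le_log hc0 (by linarith)
          _ = Real.log 2 + Real.log x := Real.log_mul two_ne_zero (ne_of_gt hx0)
      have h2 : Real.log c ≤ t * Real.log x := by
        have h2' : Real.log 2 ≤ (Real.log 2 / Real.log M) * Real.log x := by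
          rw [div_mul_eq_mul_div, le_div_iff₀ (by linarith)]
          nlinarith
        simp only [ht]; nlinarith
      have h3 : Real.log (Real.log c) ≤ Real.log (t * Real.log x) :=
        Real.log_le_log (by linarith) h2
      rw [Real.log_mul (by linarith) (by linarith)] at h3
      linarith
  -- continuity / integrability
  have hcont : ContinuousOn
      (fun x => |Real.log (Real.log x) - Real.log (Real.log c)|)
      (Set.Icc (c - R) (c + R)) := by
    apply ContinuousOn.abs
    apply ContinuousOn.sub _ continuousOn_const
    intro x hx
    have hMx : M < x := lt_of_lt_of_le hcM hx.1
    have hx0 : 0 < x := lt_trans hM0 hMx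
    have hlogx : 1 ≤ Real.log x :=
      le_trans hlogM (Real.log_le_log hM0 (le_of_lt hMx))
    exact ((Real.continuousAt_log (by linarith)).comp
      (Real.continuousAt_log (ne_of_gt hx0))).continuousWithinAt
  have hint : IntervalIntegrable
      (fun x => |Real.log (Real.log x) - Real.log (Real.log c)|)
      volume (c - R) (c + R) := by
    apply ContinuousOn.intervalIntegrable
    rwa [Set.uIcc_of_le hle]
  have hmono : (∫ x in (c - R)..(c + R),
      |Real.log (Real.log x) - Real.log (Real.log c)|) ≤
      ∫ _x in (c - R)..(c + R), Real.log t :=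
    intervalIntegral.integral_mono_on hle hint intervalIntegrable_const key
  have hconst : (∫ _x in (c - R)..(c + R), Real.log t) = 2 * R * Real.log t := by
    rw [intervalIntegral.integral_const, smul_eq_mul]
    ring
  have h2R : 0 < 2 * R := by linarith
  calc (1 / (2 * R)) * ∫ x in (c - R)..(c + R),
        |Real.log (Real.log x) - Real.log (Real.log c)|
      ≤ (1 / (2 * R)) * (2 * R * Real.log t) := by
        apply mul_le_mul_of_nonneg_left _ (by positivity)
        rw [← hconst]; exact hmono
    _ = Real.log t := by field_simp
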